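/- Polyak–Łojasiewicz condition for the smoothed robust objective: under direct parameterization, let ρ be a probability distribution on S with ρ_min := min_{s∈S} ρ(s) > 0 and let σ > 0. Then for every θ ∈ Δ(A)^S, J_{σ,ρ}(θ) − min_{θ'∈Δ(A)^S} J_{σ,ρ}(θ') ≤ C_PL · max_{π̂∈Δ(A)^S} ⟨π_θ − π̂, ∇J_{σ,ρ}(θ)⟩ + (γR/(1−γ))·(2·log|S|)/σ, where C_PL = 1/((1−γ)·ρ_min), π_θ = θ, and ⟨·,·⟩ is the Euclidean inner product on ℝ^{S×A}. -/

import Mathlib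

set_option autoImplicit false

open Finset

/-- Log-sum-exp: `LSE(σ, V) = (1/σ)·log (∑ s, exp (σ · V s))`. -/
noncomputable def lse {S : Type*} [Fintype S] (σ : ℝ) (V : S → ℝ) : ℝ :=
  (1 / σ) * Real.log (∑ s, Real.exp (σ * V s))

/-- The stochastic matrix of a policy `π` under the kernel `p`:
`P_π(s,s') = ∑ a, π(a|s)·p(s'|s,a)`. -/
noncomputable def pmat {S A : Type*} [Fintype A] (π : S → A → ℝ) (p : S → A → S → ℝ) :
    Matrix S S ℝ :=
  Matrix.of fun s s' => ∑ a, π s a * p s a s'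

/-- The discounted visitation distribution
`d^π_s(s') = (1-γ+γR)·∑_{t≥0} (γ(1-R))^t·(P_π^t)(s,s')`. -/
noncomputable def dvisit {S A : Type*} [Fintype S] [Fintype A] [DecidableEq S]
    (γ R : ℝ) (π : S → A → ℝ) (p : S → A → S → ℝ) (s s' : S) : ℝ :=
  (1 - γ + γ * R) * ∑' t : ℕ, (γ * (1 - R)) ^ t * ((pmat π p) ^ t) s s'

/-- Direct parameterization: `Θ = Δ(A)^S ⊆ ℝ^{S×A}`, `π_θ(a|s) = θ_{s,a}`. -/
def directSimplex (S A : Type*) [Fintype S] [Fintype A] : Set (EuclideanSpace ℝ (S × A)) :=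
  {θ | ∀ s, (fun a => θ (s, a)) ∈ stdSimplex ℝ A}

/-- The gradient `∇J_{σ,ρ}(θ)` of the smoothed robust objective under direct parameterization
(Theorem 4 specialized): its `(s,b)` entry is `l_θ(s)·Q_σ^{π_θ}(s,b)` with
`l_θ(s) = (1/(1-γ+γR))·d^{π_θ}_ρ(s)
  + (γR/(1-γ))·(∑_{s'} e^{σV_σ(s')}·(1/(1-γ+γR))·d^{π_θ}_{s'}(s))/(∑_{s'} e^{σV_σ(s')})`. -/
noncomputable def gradJDirect {S A : Type*} [Fintype S] [Fintype A] [DecidableEq S]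
    (γ R σ : ℝ) (p : S → A → S → ℝ) (ρ : S → ℝ) (Vσ : S → ℝ) (Qσ : S → A → ℝ)
    (θ : EuclideanSpace ℝ (S × A)) : EuclideanSpace ℝ (S × A) :=
  (WithLp.equiv 2 _).symm fun sb : S × A =>
    ((1 / (1 - γ + γ * R)) * (∑ s₀, ρ s₀ * dvisit γ R (fun s a => θ (s, a)) p s₀ sb.1)
      + (γ * R / (1 - γ)) *
        (∑ s', Real.exp (σ * Vσ s') *
          ((1 / (1 - γ + γ * R)) * dvisit γ R (fun s a => θ (s, a)) p s' sb.1)) /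
        (∑ s', Real.exp (σ * Vσ s'))) * Qσ sb.1 sb.2


open Finset

lemma my_lse_le {S : Type*} [Fintype S] [Nonempty S] (σ : ℝ) (hσ : 0 < σ)
    (V V' : S → ℝ) (m : ℝ) (h : ∀ s, V s ≤ V' s + m) :
    lse σ V ≤ lse σ V' + m := by
  have hpos : 0 < ∑ s, Real.exp (σ * V' s) :=
    Finset.sum_pos (fun s _ => Real.exp_pos _) univ_nonempty
  have hpos2 : 0 < ∑ s, Real.exp (σ * V s) :=
    Finset.sum_pos (fun s _ => Real.exp_pos _) univ_nonempty
  have h1 : (∑ s, Real.exp (σ * V s)) ≤ (∑ s, Real.exp (σ * V' s)) * Real.exp (σ * m) := by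
    rw [Finset.sum_mul]
    apply Finset.sum_le_sum
    intro s _
    rw [← Real.exp_add]
    apply Real.exp_le_exp.mpr
    have := h s
    nlinarith
  have h2 : Real.log (∑ s, Real.exp (σ * V s)) ≤
      Real.log (∑ s, Real.exp (σ * V' s)) + σ * m := by
    calc Real.log (∑ s, Real.exp (σ * V s))
        ≤ Real.log ((∑ s, Real.exp (σ * V' s)) * Real.exp (σ * m)) :=
          Real.log_le_log hpos2 h1
      _ = Real.log (∑ s, Real.exp (σ * V' s)) + σ * m := by
          rw [Real.log_mul (ne_of_gt hpos) (Real.exp_ne_zero _), Real.log_exp]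
  unfold lse
  have h3 := mul_le_mul_of_nonneg_left h2 (le_of_lt (one_div_pos.mpr hσ))
  have e : (1 / σ) * (Real.log (∑ s, Real.exp (σ * V' s)) + σ * m) =
      (1 / σ) * Real.log (∑ s, Real.exp (σ * V' s)) + m := by
    field_simp
  rw [e] at h3
  exact h3

lemma my_rowstoch {S : Type*} [Fintype S] [DecidableEq S] (P : Matrix S S ℝ)
    (hnn : ∀ s s', 0 ≤ P s s') (hrow : ∀ s, ∑ s', P s s' = 1) (t : ℕ) :
    (∀ s s', 0 ≤ (P ^ t) s s') ∧ (∀ s, ∑ s', (P ^ t) s s' = 1) := by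
  induction t with
  | zero =>
    constructor
    · intro s s'; rw [pow_zero, Matrix.one_apply]; split <;> norm_num
    · intro s; rw [pow_zero]; simp [Matrix.one_apply]
  | succ n ih =>
    constructor
    · intro s s'
      rw [pow_succ, Matrix.mul_apply]
      exact Finset.sum_nonneg fun k _ => mul_nonneg (ih.1 s k) (hnn k s')
    · intro s
      rw [pow_succ]
      simp only [Matrix.mul_apply]
      rw [Finset.sum_comm]
      simp only [← Finset.mul_sum]
      simp only [hrow, mul_one]
      exact ih.2 s
/-- **Polyak–Łojasiewicz condition for the smoothed robust objective (Theorem 5)**: under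
direct parameterization with `ρ_min = min_s ρ(s) > 0` and `σ > 0`, for every `θ ∈ Δ(A)^S`,
`J_{σ,ρ}(θ) - min J_{σ,ρ} ≤ C_PL · max_{π̂∈Δ(A)^S} ⟨π_θ - π̂, ∇J_{σ,ρ}(θ)⟩
  + (γR/(1-γ))·(2·log|S|)/σ`, where `C_PL = 1/((1-γ)·ρ_min)`. -/
theorem stmt_17 {S A : Type*} [Fintype S] [Fintype A] [Nonempty S] [Nonempty A] [DecidableEq S]
    (c : S → A → ℝ) (hc : ∀ s a, c s a ∈ Set.Icc (0 : ℝ) 1)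
    (γ : ℝ) (hγ : γ ∈ Set.Ico (0 : ℝ) 1)
    (R : ℝ) (hR : R ∈ Set.Icc (0 : ℝ) 1)
    (p : S → A → S → ℝ) (hp : ∀ s a, p s a ∈ stdSimplex ℝ S)
    (σ : ℝ) (hσ : 0 < σ)
    (ρ : S → ℝ) (hρ : ρ ∈ stdSimplex ℝ S) (hρmin : ∀ s, 0 < ρ s)
    (Vσ : EuclideanSpace ℝ (S × A) → S → ℝ)
    (hVσ : ∀ θ ∈ directSimplex S A, ∀ s, Vσ θ s = ∑ a, θ (s, a) * (c s a
      + γ * (1 - R) * ∑ s', p s a s' * Vσ θ s'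
      + γ * R * lse σ (Vσ θ)))
    (Qσ : EuclideanSpace ℝ (S × A) → S → A → ℝ)
    (hQσ : ∀ θ ∈ directSimplex S A, ∀ s a, Qσ θ s a = c s a
      + γ * (1 - R) * ∑ s', p s a s' * Vσ θ s' + γ * R * lse σ (Vσ θ))
    (θ : EuclideanSpace ℝ (S × A)) (hθ : θ ∈ directSimplex S A) :
    (∑ s, ρ s * Vσ θ s) - sInf ((fun θ' => ∑ s, ρ s * Vσ θ' s) '' directSimplex S A) ≤
      (1 / ((1 - γ) * univ.inf' univ_nonempty ρ)) *
        sSup ((fun πhat : EuclideanSpace ℝ (S × A) =>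
          (inner ℝ (θ - πhat) (gradJDirect γ R σ p ρ (Vσ θ) (Qσ θ) θ) : ℝ)) ''
            directSimplex S A)
      + (γ * R / (1 - γ)) * (2 * Real.log (Fintype.card S)) / σ := by
  classical
  obtain ⟨hγ0, hγ1⟩ := hγ
  obtain ⟨hR0, hR1⟩ := hR
  have h1γ : (0:ℝ) < 1 - γ := by linarith
  have hγR : (0:ℝ) ≤ γ * R := mul_nonneg hγ0 hR0
  have hγ1R : (0:ℝ) ≤ γ * (1 - R) := mul_nonneg hγ0 (by linarith)
  have hCpos : (0:ℝ) < 1 - γ + γ * R := by linarith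
  -- basic simplex facts
  have hentry : ∀ x ∈ directSimplex S A, ∀ (s : S) (a : A), x (s, a) ∈ Set.Icc (0:ℝ) 1 := by
    intro x hx s a
    refine ⟨(hx s).1 a, ?_⟩
    calc x (s, a) ≤ ∑ b, x (s, b) :=
          Finset.single_le_sum (fun b _ => (hx s).1 b) (mem_univ a)
      _ = 1 := (hx s).2
  -- V = Σ θ Q
  have hVQ : ∀ s, Vσ θ s = ∑ a, θ (s, a) * Qσ θ s a := by
    intro s
    rw [hVσ θ hθ s]
    exact Finset.sum_congr rfl fun a _ => by rw [hQσ θ hθ s a]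
  -- greedy action
  have hminex : ∀ s : S, ∃ a : A, ∀ b : A, Qσ θ s a ≤ Qσ θ s b := by
    intro s
    obtain ⟨a, _, ha⟩ := Finset.exists_min_image univ (Qσ θ s) univ_nonempty
    exact ⟨a, fun b => ha b (mem_univ b)⟩
  choose a₀ ha₀ using hminex
  -- advantage
  set Adv : S → ℝ := fun s => Vσ θ s - Qσ θ s (a₀ s) with hAdvdef
  have hAdv : ∀ s, 0 ≤ Adv s := by
    intro s
    have h1 : Qσ θ s (a₀ s) ≤ ∑ a, θ (s, a) * Qσ θ s a := by
      calc Qσ θ s (a₀ s) = (∑ a, θ (s, a)) * Qσ θ s (a₀ s) := by rw [(hθ s).2, one_mul]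
        _ = ∑ a, θ (s, a) * Qσ θ s (a₀ s) := Finset.sum_mul _ _ _
        _ ≤ ∑ a, θ (s, a) * Qσ θ s a :=
            Finset.sum_le_sum fun a _ => mul_le_mul_of_nonneg_left (ha₀ s a) ((hθ s).1 a)
    simp only [hAdvdef]
    rw [hVQ s]
    linarith
  -- transition matrix facts
  set π : S → A → ℝ := fun s a => θ (s, a) with hπdef
  set P : Matrix S S ℝ := pmat π p with hPdef
  have hPnn : ∀ s s', 0 ≤ P s s' := by
    intro s s'
    exact Finset.sum_nonneg fun a _ => mul_nonneg ((hθ s).1 a) ((hp s a).1 s')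
  have hProw : ∀ s, ∑ s', P s s' = 1 := by
    intro s
    show ∑ s', ∑ a, π s a * p s a s' = 1
    rw [Finset.sum_comm]
    simp only [← Finset.mul_sum]
    have : ∀ a ∈ univ, π s a * ∑ s', p s a s' = π s a := by
      intro a _; rw [(hp s a).2, mul_one]
    rw [Finset.sum_congr rfl this]
    exact (hθ s).2
  have hq0 : 0 ≤ γ * (1 - R) := hγ1R
  have hq1 : γ * (1 - R) < 1 := by nlinarith
  have hsumm : ∀ s₀ s : S, Summable (fun t : ℕ => (γ * (1 - R)) ^ t * (P ^ t) s₀ s) := by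
    intro s₀ s
    apply Summable.of_nonneg_of_le
      (fun t => mul_nonneg (pow_nonneg hq0 t) ((my_rowstoch P hPnn hProw t).1 s₀ s))
      (fun t => ?_) (summable_geometric_of_lt_one hq0 hq1)
    have h1 : (P ^ t) s₀ s ≤ 1 := by
      calc (P ^ t) s₀ s ≤ ∑ s', (P ^ t) s₀ s' :=
            Finset.single_le_sum (fun s' _ => (my_rowstoch P hPnn hProw t).1 s₀ s') (mem_univ s)
        _ = 1 := (my_rowstoch P hPnn hProw t).2 s₀
    calc (γ * (1 - R)) ^ t * (P ^ t) s₀ s ≤ (γ * (1 - R)) ^ t * 1 :=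
          mul_le_mul_of_nonneg_left h1 (pow_nonneg hq0 t)
      _ = (γ * (1 - R)) ^ t := mul_one _
  have hdnn : ∀ s₀ s : S, 0 ≤ dvisit γ R π p s₀ s := by
    intro s₀ s
    unfold dvisit
    apply mul_nonneg hCpos.le
    exact tsum_nonneg fun t =>
      mul_nonneg (pow_nonneg hq0 t) ((my_rowstoch P hPnn hProw t).1 s₀ s)
  have hdself : ∀ s : S, (1 - γ + γ * R) ≤ dvisit γ R π p s s := by
    intro s
    unfold dvisit
    have h0 : (1:ℝ) ≤ ∑' t : ℕ, (γ * (1 - R)) ^ t * (P ^ t) s s := by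
      have hle := Summable.le_tsum (hsumm s s) 0 (fun j _ =>
        mul_nonneg (pow_nonneg hq0 j) ((my_rowstoch P hPnn hProw j).1 s s))
      simpa [Matrix.one_apply_eq] using hle
    calc (1 - γ + γ * R) = (1 - γ + γ * R) * 1 := (mul_one _).symm
      _ ≤ (1 - γ + γ * R) * ∑' t : ℕ, (γ * (1 - R)) ^ t * (P ^ t) s s :=
          mul_le_mul_of_nonneg_left h0 hCpos.le
  -- the coefficient l
  set l : S → ℝ := fun s =>
    (1 / (1 - γ + γ * R)) * (∑ s₀, ρ s₀ * dvisit γ R π p s₀ s)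
      + (γ * R / (1 - γ)) *
        (∑ s', Real.exp (σ * Vσ θ s') *
          ((1 / (1 - γ + γ * R)) * dvisit γ R π p s' s)) /
        (∑ s', Real.exp (σ * Vσ θ s')) with hldef
  have hgrad : ∀ sb : S × A,
      gradJDirect γ R σ p ρ (Vσ θ) (Qσ θ) θ sb = l sb.1 * Qσ θ sb.1 sb.2 := fun sb => rfl
  have hl : ∀ s, ρ s ≤ l s := by
    intro s
    have hsum1 : ρ s * dvisit γ R π p s s ≤ ∑ s₀, ρ s₀ * dvisit γ R π p s₀ s :=
      Finset.single_le_sum (fun i _ => mul_nonneg (hρmin i).le (hdnn i s)) (mem_univ s)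
    have hsum2 : ρ s * (1 - γ + γ * R) ≤ ρ s * dvisit γ R π p s s :=
      mul_le_mul_of_nonneg_left (hdself s) (hρmin s).le
    have hfirst : ρ s ≤ (1 / (1 - γ + γ * R)) * (∑ s₀, ρ s₀ * dvisit γ R π p s₀ s) := by
      have h2 := mul_le_mul_of_nonneg_left (le_trans hsum2 hsum1)
        (le_of_lt (one_div_pos.mpr hCpos))
      have h3 : (1 / (1 - γ + γ * R)) * (ρ s * (1 - γ + γ * R)) = ρ s := by
        field_simp
      linarith
    have hsecond : 0 ≤ (γ * R / (1 - γ)) *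
        (∑ s', Real.exp (σ * Vσ θ s') *
          ((1 / (1 - γ + γ * R)) * dvisit γ R π p s' s)) /
        (∑ s', Real.exp (σ * Vσ θ s')) := by
      apply div_nonneg
      · apply mul_nonneg (div_nonneg hγR h1γ.le)
        exact Finset.sum_nonneg fun s' _ => mul_nonneg (Real.exp_pos _).le
          (mul_nonneg (by positivity) (hdnn s' s))
      · exact Finset.sum_nonneg fun s' _ => (Real.exp_pos _).le
    simp only [hldef]
    linarith
  -- inner product formula
  have hinner : ∀ π' : EuclideanSpace ℝ (S × A),
      (inner ℝ (θ - π') (gradJDirect γ R σ p ρ (Vσ θ) (Qσ θ) θ) : ℝ)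
        = ∑ s, ∑ a, (θ (s, a) - π' (s, a)) * (l s * Qσ θ s a) := by
    intro π'
    have e0 : (inner ℝ (θ - π') (gradJDirect γ R σ p ρ (Vσ θ) (Qσ θ) θ) : ℝ)
        = ∑ i : S × A, (θ - π') i * gradJDirect γ R σ p ρ (Vσ θ) (Qσ θ) θ i := by
      simp [PiLp.inner_apply, RCLike.inner_apply, mul_comm]
    rw [e0, Fintype.sum_prod_type]
    refine Finset.sum_congr rfl fun s _ => Finset.sum_congr rfl fun a _ => ?_
    rw [hgrad (s, a)]
    simp
  -- the greedy policy
  set πg : EuclideanSpace ℝ (S × A) :=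
    (WithLp.equiv 2 _).symm (fun sb : S × A => if sb.2 = a₀ sb.1 then (1:ℝ) else 0) with hπgdef
  have hπg : πg ∈ directSimplex S A := by
    intro s
    constructor
    · intro a
      show (0:ℝ) ≤ if a = a₀ s then (1:ℝ) else 0
      split <;> norm_num
    · show (∑ a, if a = a₀ s then (1:ℝ) else 0) = 1
      simp
  have hIval : (inner ℝ (θ - πg) (gradJDirect γ R σ p ρ (Vσ θ) (Qσ θ) θ) : ℝ)
      = ∑ s, l s * Adv s := by
    rw [hinner πg]
    apply Finset.sum_congr rfl
    intro s _
    have e1 : ∀ a, πg (s, a) = if a = a₀ s then (1:ℝ) else 0 := fun a => rfl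
    simp only [e1, sub_mul]
    rw [Finset.sum_sub_distrib]
    have e2 : ∑ a, θ (s, a) * (l s * Qσ θ s a) = l s * Vσ θ s := by
      rw [hVQ s, Finset.mul_sum]
      exact Finset.sum_congr rfl fun a _ => by ring
    have e3 : ∑ a, (if a = a₀ s then (1:ℝ) else 0) * (l s * Qσ θ s a)
        = l s * Qσ θ s (a₀ s) := by
      simp only [ite_mul, one_mul, zero_mul, Finset.sum_ite_eq', mem_univ, if_true]
    rw [e2, e3]
    simp only [hAdvdef]
    ring
  -- bound on the sSup set
  set G := gradJDirect γ R σ p ρ (Vσ θ) (Qσ θ) θ with hGdef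
  have hbdd : BddAbove ((fun πhat : EuclideanSpace ℝ (S × A) =>
      (inner ℝ (θ - πhat) G : ℝ)) '' directSimplex S A) := by
    refine ⟨∑ s, ∑ a, |l s * Qσ θ s a|, ?_⟩
    rintro y ⟨π', hπ', rfl⟩
    dsimp only
    rw [hinner π']
    apply Finset.sum_le_sum
    intro s _
    apply Finset.sum_le_sum
    intro a _
    have h1 : |θ (s, a) - π' (s, a)| ≤ 1 := by
      have ha1 := hentry θ hθ s a
      have ha2 := hentry π' hπ' s a
      rw [abs_le]
      constructor <;> [linarith [ha1.1, ha2.2]; linarith [ha1.2, ha2.1]]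
    calc (θ (s, a) - π' (s, a)) * (l s * Qσ θ s a)
        ≤ |(θ (s, a) - π' (s, a)) * (l s * Qσ θ s a)| := le_abs_self _
      _ = |θ (s, a) - π' (s, a)| * |l s * Qσ θ s a| := abs_mul _ _
      _ ≤ 1 * |l s * Qσ θ s a| := mul_le_mul_of_nonneg_right h1 (abs_nonneg _)
      _ = |l s * Qσ θ s a| := one_mul _
  have hIle : (∑ s, l s * Adv s) ≤ sSup ((fun πhat : EuclideanSpace ℝ (S × A) =>
      (inner ℝ (θ - πhat) G : ℝ)) '' directSimplex S A) := by
    rw [← hIval]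
    exact le_csSup hbdd ⟨πg, hπg, rfl⟩
  -- rmin
  set rmin : ℝ := univ.inf' univ_nonempty ρ with hrmindef
  have hrminpos : 0 < rmin := (Finset.lt_inf'_iff _).mpr fun s _ => hρmin s
  have hrminle : ∀ s, rmin ≤ ρ s := fun s => Finset.inf'_le ρ (mem_univ s)
  have hrI : rmin * (∑ s, Adv s) ≤ ∑ s, l s * Adv s := by
    rw [Finset.mul_sum]
    exact Finset.sum_le_sum fun s _ =>
      mul_le_mul_of_nonneg_right (le_trans (hrminle s) (hl s)) (hAdv s)
  -- performance difference bound
  have hkey : ∀ θ' ∈ directSimplex S A,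
      (∑ s, ρ s * Vσ θ s) - (∑ s, ρ s * Vσ θ' s) ≤ (1 / (1 - γ)) * ∑ s, Adv s := by
    intro θ' hθ'
    obtain ⟨t, _, ht⟩ := Finset.exists_max_image univ (fun s => Vσ θ s - Vσ θ' s) univ_nonempty
    have ht' : ∀ s, Vσ θ s - Vσ θ' s ≤ Vσ θ t - Vσ θ' t := fun s => ht s (mem_univ s)
    set Mt : ℝ := Vσ θ t - Vσ θ' t with hMtdef
    have hLse : lse σ (Vσ θ) ≤ lse σ (Vσ θ') + Mt :=
      my_lse_le σ hσ _ _ _ (fun s => by have := ht' s; linarith)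
    have hsum1 : (∑ a, θ' (t, a) * Qσ θ t a) - Vσ θ' t ≤ γ * Mt := by
      rw [hVσ θ' hθ' t, ← Finset.sum_sub_distrib]
      have hterm : ∀ a ∈ univ, θ' (t, a) * Qσ θ t a
          - θ' (t, a) * (c t a + γ * (1 - R) * ∑ s', p t a s' * Vσ θ' s'
            + γ * R * lse σ (Vσ θ')) ≤ θ' (t, a) * (γ * Mt) := by
        intro a _
        rw [← mul_sub]
        apply mul_le_mul_of_nonneg_left _ ((hθ' t).1 a)
        rw [hQσ θ hθ t a]
        have hp1 : (∑ s', p t a s' * Vσ θ s') - (∑ s', p t a s' * Vσ θ' s') ≤ Mt := by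
          rw [← Finset.sum_sub_distrib]
          have hterm2 : ∀ s' ∈ univ, p t a s' * Vσ θ s' - p t a s' * Vσ θ' s'
              ≤ p t a s' * Mt := by
            intro s' _
            rw [← mul_sub]
            exact mul_le_mul_of_nonneg_left (ht' s') ((hp t a).1 s')
          calc ∑ s', (p t a s' * Vσ θ s' - p t a s' * Vσ θ' s')
              ≤ ∑ s', p t a s' * Mt := Finset.sum_le_sum hterm2
            _ = Mt := by rw [← Finset.sum_mul, (hp t a).2, one_mul]
        have h2 : lse σ (Vσ θ) - lse σ (Vσ θ') ≤ Mt := by linarith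
        have h3 := mul_le_mul_of_nonneg_left hp1 hγ1R
        have h4 := mul_le_mul_of_nonneg_left h2 hγR
        nlinarith
      calc ∑ a, (θ' (t, a) * Qσ θ t a
            - θ' (t, a) * (c t a + γ * (1 - R) * ∑ s', p t a s' * Vσ θ' s'
              + γ * R * lse σ (Vσ θ')))
          ≤ ∑ a, θ' (t, a) * (γ * Mt) := Finset.sum_le_sum hterm
        _ = γ * Mt := by rw [← Finset.sum_mul, (hθ' t).2, one_mul]
    have hAdvt : Vσ θ t - (∑ a, θ' (t, a) * Qσ θ t a) ≤ Adv t := by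
      have h1 : Qσ θ t (a₀ t) ≤ ∑ a, θ' (t, a) * Qσ θ t a := by
        calc Qσ θ t (a₀ t) = (∑ a, θ' (t, a)) * Qσ θ t (a₀ t) := by rw [(hθ' t).2, one_mul]
          _ = ∑ a, θ' (t, a) * Qσ θ t (a₀ t) := Finset.sum_mul _ _ _
          _ ≤ ∑ a, θ' (t, a) * Qσ θ t a :=
              Finset.sum_le_sum fun a _ => mul_le_mul_of_nonneg_left (ha₀ t a) ((hθ' t).1 a)
      simp only [hAdvdef]
      linarith
    have hMtb : (1 - γ) * Mt ≤ Adv t := by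
      have : Mt = (Vσ θ t - (∑ a, θ' (t, a) * Qσ θ t a))
          + ((∑ a, θ' (t, a) * Qσ θ t a) - Vσ θ' t) := by simp only [hMtdef]; ring
      nlinarith
    have hJ : (∑ s, ρ s * Vσ θ s) - (∑ s, ρ s * Vσ θ' s) ≤ Mt := by
      rw [← Finset.sum_sub_distrib]
      calc ∑ s, (ρ s * Vσ θ s - ρ s * Vσ θ' s)
          ≤ ∑ s, ρ s * Mt := Finset.sum_le_sum fun s _ => by
            rw [← mul_sub]; exact mul_le_mul_of_nonneg_left (ht' s) (hρmin s).le
        _ = Mt := by rw [← Finset.sum_mul, hρ.2, one_mul]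
    have hAdvsum : Adv t ≤ ∑ s, Adv s :=
      Finset.single_le_sum (fun s _ => hAdv s) (mem_univ t)
    have hfin : (1 - γ) * Mt ≤ ∑ s, Adv s := le_trans hMtb hAdvsum
    have h2 := mul_le_mul_of_nonneg_left hfin (le_of_lt (one_div_pos.mpr h1γ))
    have h3 : (1 / (1 - γ)) * ((1 - γ) * Mt) = Mt := by field_simp
    linarith
  -- assemble
  set SS := sSup ((fun πhat : EuclideanSpace ℝ (S × A) =>
      (inner ℝ (θ - πhat) G : ℝ)) '' directSimplex S A) with hSSdef
  have hfinal : ∀ θ' ∈ directSimplex S A,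
      (∑ s, ρ s * Vσ θ s) - (1 / ((1 - γ) * rmin)) * SS ≤ ∑ s, ρ s * Vσ θ' s := by
    intro θ' hθ'
    have h1 := hkey θ' hθ'
    have h2 : (1 / (1 - γ)) * ∑ s, Adv s
        = (1 / ((1 - γ) * rmin)) * (rmin * ∑ s, Adv s) := by
      have h0 : rmin ≠ 0 := ne_of_gt hrminpos
      field_simp
    have h3 : (1 / ((1 - γ) * rmin)) * (rmin * ∑ s, Adv s)
        ≤ (1 / ((1 - γ) * rmin)) * SS := by
      apply mul_le_mul_of_nonneg_left (le_trans hrI hIle)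
      positivity
    linarith
  have hinf : (∑ s, ρ s * Vσ θ s) - (1 / ((1 - γ) * rmin)) * SS ≤
      sInf ((fun θ' => ∑ s, ρ s * Vσ θ' s) '' directSimplex S A) := by
    refine le_csInf ⟨_, Set.mem_image_of_mem _ hθ⟩ ?_
    rintro b ⟨θ', hθ', rfl⟩
    exact hfinal θ' hθ'
  have hslack : 0 ≤ (γ * R / (1 - γ)) * (2 * Real.log (Fintype.card S)) / σ := by
    apply div_nonneg _ hσ.le
    apply mul_nonneg (div_nonneg hγR h1γ.le)
    apply mul_nonneg (by norm_num)
    apply Real.log_nonneg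
    exact_mod_cast Fintype.card_pos
  linarith
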